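/- Let n ≥ 1, let x be a real polynomial of degree exactly n with leading coefficient b_n ≠ 0, let ΔQ > 0, let t_j ∈ ℝ and Δt ≥ 0. Then there exists a real polynomial q of degree at most n − 1 such that |q(t) − x(t)| ≤ ΔQ for every t ∈ [t_j, t_j + Δt] if and only if |b_n|·Δt^n ≤ 2^(2n−1)·ΔQ. -/

import Mathlib

open Polynomial

open Polynomial Polynomial.Chebyshev Real

lemma cheb_pair (n : ℕ) :
    ((T ℝ n).degree ≤ (n:ℕ) ∧ (T ℝ n).coeff n = if n = 0 then 1 else 2^(n-1)) ∧
    ((T ℝ (n+1:ℕ)).degree ≤ ((n+1:ℕ):ℕ) ∧ (T ℝ (n+1:ℕ)).coeff (n+1) = 2^n) := by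
  induction n with
  | zero =>
    refine ⟨⟨?_, ?_⟩, ?_, ?_⟩ <;> simp [T_zero, T_one]
  | succ n ih =>
    obtain ⟨⟨h0d, h0c⟩, h1d, h1c⟩ := ih
    have hT2 : T ℝ (n+2:ℕ) = 2 * X * T ℝ (n+1:ℕ) - T ℝ n := by
      have := T_add_two ℝ (n : ℤ)
      push_cast
      push_cast at this
      convert this using 2
    have h2C : (2 : ℝ[X]) = C 2 := (map_ofNat Polynomial.C 2).symm
    have hdX : (2 * X * T ℝ (n+1:ℕ)).degree ≤ ((n+2 : ℕ) : WithBot ℕ) := by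
      calc (2 * X * T ℝ (n+1:ℕ)).degree ≤ (2 * X : ℝ[X]).degree + (T ℝ (n+1:ℕ)).degree :=
            degree_mul_le _ _
        _ ≤ 1 + ((n+1:ℕ) : WithBot ℕ) := by
            refine add_le_add ?_ h1d
            rw [h2C]
            exact (degree_C_mul_X (by norm_num)).le
        _ = ((n+2:ℕ) : WithBot ℕ) := by push_cast; ring
    refine ⟨⟨h1d, by simpa using h1c⟩, ?_, ?_⟩
    · rw [hT2]
      refine (degree_sub_le _ _).trans (max_le hdX (h0d.trans ?_))
      exact Nat.cast_le.mpr (by omega)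
    · rw [hT2, coeff_sub]
      have hc0 : (T ℝ n).coeff (n+2) = 0 :=
        coeff_eq_zero_of_degree_lt (h0d.trans_lt (Nat.cast_lt.mpr (by omega)))
      have : 2 * X * T ℝ (n+1:ℕ) = C 2 * (X * T ℝ (n+1:ℕ)) := by rw [h2C]; ring
      rw [this, coeff_C_mul, coeff_X_mul, h1c, hc0]
      ring

lemma cheb_degree {n : ℕ} (hn : 1 ≤ n) :
    (T ℝ n).degree = n ∧ (T ℝ n).natDegree = n ∧ (T ℝ n).leadingCoeff = 2^(n-1) := by
  obtain ⟨hd, hc⟩ := (cheb_pair n).1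
  rw [if_neg (by omega)] at hc
  have hne : (T ℝ n).coeff n ≠ 0 := by rw [hc]; positivity
  have hdeg : (T ℝ n).degree = n := le_antisymm hd (le_degree_of_ne_zero hne)
  have hnat : (T ℝ n).natDegree = n := natDegree_eq_of_degree_eq_some hdeg
  exact ⟨hdeg, hnat, by rw [leadingCoeff, hnat, hc]⟩

lemma exists_root_of_mul_neg (p : ℝ[X]) {a b : ℝ} (hab : a < b)
    (h : p.eval a * p.eval b < 0) : ∃ r ∈ Set.Ioo a b, p.eval r = 0 := by
  have hcont : ContinuousOn (fun t => p.eval t) (Set.Icc a b) := p.continuous.continuousOn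
  rcases lt_trichotomy (p.eval a) 0 with ha | ha | ha
  · have hb : 0 < p.eval b := by nlinarith
    obtain ⟨r, hr, hr0⟩ := intermediate_value_Ioo hab.le hcont (Set.mem_Ioo.mpr ⟨ha, hb⟩)
    exact ⟨r, hr, hr0⟩
  · rw [ha] at h; simp at h
  · have hb : p.eval b < 0 := by nlinarith
    obtain ⟨r, hr, hr0⟩ := intermediate_value_Ioo' hab.le hcont (Set.mem_Ioo.mpr ⟨hb, ha⟩)
    exact ⟨r, hr, hr0⟩

set_option maxHeartbeats 1000000 in
lemma step_aux (n : ℕ) (hn : 1 ≤ n) (x : Polynomial ℝ) (bn : ℝ)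
    (hx : x.degree = n) (hbn : x.leadingCoeff = bn) (hbn0 : bn ≠ 0)
    (ΔQ : ℝ) (hΔQ : 0 < ΔQ) (tj Δt : ℝ) (hΔt : 0 ≤ Δt) (hΔt' : 0 < Δt)
    (h2n : (0:ℝ) < 2 ^ (2*n-1)) :
    (∃ q : Polynomial ℝ, q.degree ≤ (n - 1 : ℕ) ∧
        ∀ t ∈ Set.Icc tj (tj + Δt), |q.eval t - x.eval t| ≤ ΔQ) ↔
      |bn| * Δt ^ n ≤ 2 ^ (2 * n - 1) * ΔQ := by
  obtain ⟨hTdeg, hTnat, hTlead⟩ := cheb_degree hn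
  have hnR : (0:ℝ) < n := by exact_mod_cast hn
  set c : ℝ := bn * Δt ^ n / 2 ^ (2*n-1) with hc
  have hΔpow : (0:ℝ) < Δt ^ n := by positivity
  have hcne : c ≠ 0 :=
    div_ne_zero (mul_ne_zero hbn0 hΔpow.ne') h2n.ne'
  have hcabs : |c| = |bn| * Δt ^ n / 2 ^ (2*n-1) := by
    rw [hc, abs_div, abs_mul, abs_pow, abs_of_nonneg hΔt, abs_of_pos h2n]
  set L : ℝ[X] := C (2/Δt) * X + C (-(2*tj+Δt)/Δt) with hL
  have hLa : (2/Δt : ℝ) ≠ 0 := by positivity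
  have hLnat : L.natDegree = 1 := natDegree_linear hLa
  have hLeval : ∀ t, L.eval t = (2*t - (2*tj+Δt))/Δt := by
    intro t; rw [hL]; simp; ring
  set P : ℝ[X] := C c * ((T ℝ n).comp L) with hP
  have hPnat : P.natDegree = n := by
    rw [hP, natDegree_C_mul hcne, natDegree_comp, hTnat, hLnat, mul_one]
  have h2pow : (2:ℝ)^(n-1) * 2^n = 2^(2*n-1) := by rw [← pow_add]; congr 1; omega
  have hPlead : P.leadingCoeff = bn := by
    rw [hP, leadingCoeff_mul, leadingCoeff_C,
      leadingCoeff_comp (by rw [hLnat]; norm_num), hTlead, leadingCoeff_linear hLa, hTnat]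
    rw [hc, div_pow]
    field_simp
    linear_combination h2pow
  have hPne : P ≠ 0 := fun h => hbn0 (by rw [← hPlead, h, leadingCoeff_zero])
  have hPdeg : P.degree = n := by rw [degree_eq_natDegree hPne, hPnat]
  have hPeval : ∀ t, P.eval t = c * (T ℝ n).eval (L.eval t) := by
    intro t; rw [hP]; simp [eval_comp]
  have hTbound : ∀ s ∈ Set.Icc (-1:ℝ) 1, |(T ℝ n).eval s| ≤ 1 := by
    intro s hs
    obtain ⟨θ, _, hθs⟩ := Real.surjOn_cos hs
    rw [← hθs, T_real_cos]
    exact abs_cos_le_one _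
  have hPbound : ∀ t ∈ Set.Icc tj (tj+Δt), |P.eval t| ≤ |c| := by
    intro t ht
    rw [hPeval, abs_mul]
    have hmem : L.eval t ∈ Set.Icc (-1:ℝ) 1 := by
      rw [hLeval]
      constructor
      · rw [le_div_iff₀ hΔt']; linarith [ht.1]
      · rw [div_le_iff₀ hΔt']; linarith [ht.2]
    calc |c| * |(T ℝ n).eval (L.eval t)| ≤ |c| * 1 :=
          mul_le_mul_of_nonneg_left (hTbound _ hmem) (abs_nonneg c)
      _ = |c| := mul_one _
  set τ : ℕ → ℝ := fun k => tj + Δt/2 * (1 + Real.cos (k*π/n)) with hτ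
  have hτmem : ∀ k : ℕ, τ k ∈ Set.Icc tj (tj+Δt) := by
    intro k
    have g1 := Real.neg_one_le_cos (k*π/n)
    have g2 := Real.cos_le_one (k*π/n)
    simp only [hτ]
    constructor <;> nlinarith
  have hτval : ∀ k, k ≤ n → P.eval (τ k) = c * (-1)^k := by
    intro k hk
    have hLk : L.eval (τ k) = Real.cos (k*π/n) := by
      rw [hLeval, hτ]; field_simp; ring
    have harg : (n:ℝ) * ((k:ℝ)*π/n) = k * π := by field_simp
    have hck : Real.cos ((k:ℝ) * π) = (-1)^k := by
      have := Real.cos_nat_mul_pi_sub 0 k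
      simpa using this
    rw [hPeval, hLk, T_real_cos]
    push_cast
    rw [harg, hck]
  have hτanti : ∀ k l : ℕ, k < l → l ≤ n → τ l < τ k := by
    intro k l hkl hln
    have hπ := Real.pi_pos
    have h1 : (k:ℝ)*π/n ∈ Set.Icc 0 π := by
      constructor
      · positivity
      · rw [div_le_iff₀ hnR]
        have : (k:ℝ) ≤ n := by exact_mod_cast (by omega : k ≤ n)
        nlinarith
    have h2 : (l:ℝ)*π/n ∈ Set.Icc 0 π := by
      constructor
      · positivity
      · rw [div_le_iff₀ hnR]
        have : (l:ℝ) ≤ n := by exact_mod_cast hln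
        nlinarith
    have hlt : (k:ℝ)*π/n < (l:ℝ)*π/n := by
      have hkl' : (k:ℝ) < l := by exact_mod_cast hkl
      have : (k:ℝ)*π < (l:ℝ)*π := by nlinarith
      exact (div_lt_div_iff_of_pos_right hnR).mpr this
    have := Real.strictAntiOn_cos h1 h2 hlt
    simp only [hτ]
    nlinarith [this]
  clear hPeval hTbound hTdeg hTnat hTlead hLnat hLeval hLa hτ hc hP hL
  clear_value τ P c
  clear L
  constructor
  · -- necessity
    rintro ⟨q, hqdeg, hq⟩
    by_contra hcon
    push_neg at hcon
    have hQc : ΔQ < |c| := by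
      rw [hcabs, lt_div_iff₀ h2n]; linarith
    have hqx : q.degree < x.degree := lt_of_le_of_lt hqdeg (by rw [hx]; exact Nat.cast_lt.mpr (by omega))
    set d : ℝ[X] := P - (x - q) with hd
    have hxq_deg : (x - q).degree = x.degree := degree_sub_eq_left_of_degree_lt hqx
    have hxq_lead : (x - q).leadingCoeff = bn := by
      rw [leadingCoeff_sub_of_degree_lt hqx, hbn]
    have hddeg : d.degree < (n : WithBot ℕ) := by
      rw [hd]
      have h := degree_sub_lt (show P.degree = (x - q).degree by rw [hPdeg, hxq_deg, hx]) hPne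
        (show P.leadingCoeff = (x - q).leadingCoeff by rw [hPlead, hxq_lead])
      rwa [hPdeg] at h
    have he : ∀ t ∈ Set.Icc tj (tj+Δt), |(x - q).eval t| ≤ ΔQ := by
      intro t ht
      rw [eval_sub, abs_sub_comm]
      exact hq t ht
    have hu : ∀ k, k ≤ n → 0 < c * ((-1)^k * d.eval (τ k)) := by
      intro k hk
      have hdk : d.eval (τ k) = c * (-1)^k - (x - q).eval (τ k) := by
        rw [hd, eval_sub, hτval k hk]
      have hek := he (τ k) (hτmem k)
      have hs1 : ((-1:ℝ)^k)^2 = 1 := by rw [← pow_mul, mul_comm, pow_mul]; norm_num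
      have habs : |(-1:ℝ)^k| = 1 := by rw [abs_pow, abs_neg, abs_one, one_pow]
      have h1 : |c * ((-1)^k * (x - q).eval (τ k))| ≤ |c| * ΔQ := by
        rw [abs_mul, abs_mul, habs, one_mul]
        exact mul_le_mul_of_nonneg_left hek (abs_nonneg c)
      have h2 : |c| * ΔQ < |c| * |c| := mul_lt_mul_of_pos_left hQc (abs_pos.mpr hcne)
      have h3 : |c| * |c| = c^2 := by rw [← abs_mul, abs_mul_self, sq]
      have h4 := (abs_le.mp h1).2
      have expand : c * ((-1)^k * d.eval (τ k))
          = c^2 - c * ((-1)^k * (x - q).eval (τ k)) := by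
        rw [hdk]; linear_combination c^2 * hs1
      rw [expand]; rw [h3] at h2; linarith
    clear_value d
    have hd0 : d ≠ 0 := by
      intro h0
      have := hu 0 (by omega)
      rw [h0] at this
      simp at this
    have hdnat : d.natDegree < n := (natDegree_lt_iff_degree_lt hd0).mpr hddeg
    have hroot : ∀ k : Fin n, ∃ r ∈ Set.Ioo (τ ((k:ℕ)+1)) (τ (k:ℕ)), d.eval r = 0 := by
      intro k
      have hkn : (k:ℕ) < n := k.isLt
      apply exists_root_of_mul_neg d (hτanti (k:ℕ) ((k:ℕ)+1) (by omega) (by omega))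
      have h1 := hu (k:ℕ) (by omega)
      have h2 := hu ((k:ℕ)+1) (by omega)
      have hs1 : ((-1:ℝ)^(k:ℕ))^2 = 1 := by rw [← pow_mul, mul_comm, pow_mul]; norm_num
      have hc2 : (0:ℝ) < c^2 := by positivity
      have pos := mul_pos h1 h2
      have key : (c * ((-1:ℝ)^(k:ℕ) * d.eval (τ (k:ℕ)))) *
          (c * ((-1:ℝ)^((k:ℕ)+1) * d.eval (τ ((k:ℕ)+1))))
          = c^2 * (-(d.eval (τ ((k:ℕ)+1)) * d.eval (τ (k:ℕ)))) := by
        linear_combination (-(c^2) * d.eval (τ (k:ℕ)) * d.eval (τ ((k:ℕ)+1))) * hs1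
      rw [key] at pos
      nlinarith [pos, hc2]
    choose r hr hr0 using hroot
    have hlt : ∀ k l : Fin n, k < l → r l < r k := by
      intro k l hkl
      have h1 : r l < τ (l:ℕ) := (hr l).2
      have h2 : τ ((k:ℕ)+1) < r k := (hr k).1
      have h3 : τ (l:ℕ) ≤ τ ((k:ℕ)+1) := by
        rcases eq_or_lt_of_le (by exact_mod_cast hkl : (k:ℕ)+1 ≤ (l:ℕ)) with h | h
        · rw [← h]
        · exact (hτanti _ _ h (by omega)).le
      linarith
    have hrinj : Function.Injective r := by
      intro k l hkl
      rcases lt_trichotomy k l with h | h | h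
      · exact absurd hkl (hlt k l h).ne'
      · exact h
      · exact absurd hkl (hlt l k h).ne
    have : d = 0 :=
      Polynomial.eq_zero_of_natDegree_lt_card_of_eval_eq_zero d hrinj hr0 (by simpa using hdnat)
    exact hd0 this
  · -- sufficiency
    intro hrhs
    have hcle : |c| ≤ ΔQ := by
      rw [hcabs, div_le_iff₀ h2n]; linarith
    have hxne : x ≠ 0 := by
      intro h
      rw [h, degree_zero] at hx
      exact absurd hx (by simp)
    refine ⟨x - P, ?_, ?_⟩
    · have hlt : (x - P).degree < (n : WithBot ℕ) := by
        have := degree_sub_lt (hx.trans hPdeg.symm) hxne (by rw [hbn, hPlead])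
        rwa [hx] at this
      by_cases h0 : x - P = 0
      · rw [h0, degree_zero]; exact bot_le
      · have h1 : (x - P).natDegree < n := (natDegree_lt_iff_degree_lt h0).mpr hlt
        exact degree_le_natDegree.trans (Nat.cast_le.mpr (by omega))
    · intro t ht
      have : (x - P).eval t - x.eval t = -(P.eval t) := by simp
      rw [this, abs_neg]
      exact (hPbound t ht).trans hcle


/-- Sharp step-size characterization: a polynomial `q` of degree at most `n − 1` staying within
`ΔQ` of a degree-`n` polynomial `x` (leading coefficient `b_n ≠ 0`) on `[t_j, t_j + Δt]` exists
if and only if `|b_n|·Δt^n ≤ 2^(2n−1)·ΔQ`. -/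
theorem step_size_bound_iff (n : ℕ) (hn : 1 ≤ n) (x : Polynomial ℝ) (bn : ℝ)
    (hx : x.degree = n) (hbn : x.leadingCoeff = bn) (hbn0 : bn ≠ 0)
    (ΔQ : ℝ) (hΔQ : 0 < ΔQ) (tj Δt : ℝ) (hΔt : 0 ≤ Δt) :
    (∃ q : Polynomial ℝ, q.degree ≤ (n - 1 : ℕ) ∧
        ∀ t ∈ Set.Icc tj (tj + Δt), |q.eval t - x.eval t| ≤ ΔQ) ↔
      |bn| * Δt ^ n ≤ 2 ^ (2 * n - 1) * ΔQ := by
  have h2n : (0:ℝ) < 2 ^ (2*n-1) := by positivity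
  rcases eq_or_lt_of_le hΔt with hΔ0 | hΔt'
  · subst hΔ0
    constructor
    · intro _
      rw [zero_pow (by omega : n ≠ 0), mul_zero]
      positivity
    · intro _
      refine ⟨C (x.eval tj), degree_C_le.trans (by exact_mod_cast Nat.zero_le _), ?_⟩
      intro t ht
      have h1 := ht.1
      have h2 := ht.2
      have : t = tj := le_antisymm (by linarith) h1
      rw [this]
      simp [hΔQ.le]
  · exact step_aux n hn x bn hx hbn hbn0 ΔQ hΔQ tj Δt hΔt hΔt' h2n
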